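/- Let T be a p×p real matrix every eigenvalue of which, viewed over ℂ, has strictly negative real part; let e be the all-ones vector in ℝ^p, t := −T e, and π ∈ ℝ^p. Then for every u ≥ 0, ∫₀^∞ e^{−uz} · (π·(exp(zT) t)) dz = π·((u·I − T)⁻¹ t). (The Laplace transform of a phase-type distribution PH(π, T) is 𝓛(u) = π (uI − T)^{−1} t.) -/

import Mathlib

open Matrix MeasureTheory NormedSpace Nat

variable {n : Type*} [Fintype n] [DecidableEq n]





lemma aux_exp_summable (M : Matrix n n ℂ) :
    Summable fun k : ℕ => ((k ! : ℝ))⁻¹ • M ^ k := by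
  letI : SeminormedRing (Matrix n n ℂ) := Matrix.linftyOpSemiNormedRing
  letI : NormedRing (Matrix n n ℂ) := Matrix.linftyOpNormedRing
  letI : NormedAlgebra ℝ (Matrix n n ℂ) := Matrix.linftyOpNormedAlgebra
  exact expSeries_summable' (𝕂 := ℝ) M

lemma aux_exp_complex_smul_one (c : ℂ) :
    exp (c • (1 : Matrix n n ℂ)) = Complex.exp c • (1 : Matrix n n ℂ) := by
  letI : SeminormedRing (Matrix n n ℂ) := Matrix.linftyOpSemiNormedRing
  letI : NormedRing (Matrix n n ℂ) := Matrix.linftyOpNormedRing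
  letI : NormedAlgebra ℝ (Matrix n n ℂ) := Matrix.linftyOpNormedAlgebra
  letI : NormedAlgebra ℂ (Matrix n n ℂ) := Matrix.linftyOpNormedAlgebra
  have h := (map_exp (algebraMap ℂ (Matrix n n ℂ)) (continuous_algebraMap _ _) c).symm
  rw [Algebra.algebraMap_eq_smul_one c, Algebra.algebraMap_eq_smul_one (exp c)] at h
  rw [show (exp c : ℂ) = Complex.exp c by
    rw [Complex.exp_eq_exp_ℂ]] at h
  exact h

lemma aux_tsum_mulVec {f : ℕ → Matrix n n ℂ} (hf : Summable f) (v : n → ℂ) :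
    (∑' k, f k) *ᵥ v = ∑' k, f k *ᵥ v := by
  letI : SeminormedRing (Matrix n n ℂ) := Matrix.linftyOpSemiNormedRing
  letI : NormedRing (Matrix n n ℂ) := Matrix.linftyOpNormedRing
  letI : NormedAlgebra ℝ (Matrix n n ℂ) := Matrix.linftyOpNormedAlgebra
  let L0 : Matrix n n ℂ →ₗ[ℝ] (n → ℂ) :=
    { toFun := fun M => M *ᵥ v
      map_add' := fun M N => by simp [Matrix.add_mulVec]
      map_smul' := fun c M => by simp [Matrix.smul_mulVec] }
  let L := LinearMap.toContinuousLinearMap L0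
  exact L.map_tsum hf

lemma aux_exp_mulVec_eig {m : ℕ} (M : Matrix n n ℂ) (μ : ℂ) (v : n → ℂ)
    (hv : ((M - μ • 1) ^ m) *ᵥ v = 0) (z : ℝ) :
    exp (z • M) *ᵥ v =
      Complex.exp (z * μ) •
        ∑ k ∈ Finset.range m,
          (((z : ℂ) ^ k * ((k ! : ℂ))⁻¹) • ((M - μ • 1) ^ k *ᵥ v)) := by
  set N := M - μ • 1 with hN
  have hsplit : z • M = ((z : ℂ) * μ) • (1 : Matrix n n ℂ) + z • N := by
    have h1 : μ • (1 : Matrix n n ℂ) + N = M := by rw [hN]; abel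
    have h2 : ((z : ℂ) * μ) • (1 : Matrix n n ℂ) = z • (μ • (1 : Matrix n n ℂ)) := by
      rw [← smul_assoc]; norm_num [Complex.real_smul]
    rw [h2, ← smul_add, h1]
  have hcomm : Commute (((z : ℂ) * μ) • (1 : Matrix n n ℂ)) (z • N) :=
    ((Commute.one_left (z • N)).smul_left _)
  rw [hsplit, Matrix.exp_add_of_commute _ _ hcomm, aux_exp_complex_smul_one,
    smul_one_mul, Matrix.smul_mulVec]
  congr 1
  have hts : exp (z • N) = ∑' k : ℕ, ((k ! : ℝ))⁻¹ • (z • N) ^ k :=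
    congrFun (exp_eq_tsum (𝕂 := ℝ)) (z • N)
  rw [hts, aux_tsum_mulVec (aux_exp_summable _) v]
  rw [tsum_eq_sum (s := Finset.range m) ?_]
  · refine Finset.sum_congr rfl fun k _ => ?_
    have hmat : ((k ! : ℝ))⁻¹ • (z • N) ^ k
        = ((z : ℂ) ^ k * ((k ! : ℂ))⁻¹) • N ^ k := by
      rw [smul_pow, ← algebraMap_smul ℂ ((k ! : ℝ))⁻¹ (z ^ k • N ^ k),
        ← algebraMap_smul ℂ (z ^ k) (N ^ k), smul_smul]
      congr 1
      simp only [Complex.coe_algebraMap]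
      push_cast
      ring
    rw [hmat, smul_mulVec]
  · intro k hk
    rw [Finset.mem_range, not_lt] at hk
    rw [smul_pow, smul_mulVec, smul_mulVec]
    rw [show N ^ k = N ^ (k - m) * N ^ m by rw [← pow_add]; congr 1; omega,
      ← Matrix.mulVec_mulVec, hv, Matrix.mulVec_zero, smul_zero, smul_zero]



lemma aux_dot_sum {ι : Type*} (s : Finset ι) (x : n → ℂ) (v : ι → n → ℂ) :
    x ⬝ᵥ (∑ i ∈ s, v i) = ∑ i ∈ s, x ⬝ᵥ v i := by
  simp only [dotProduct, Finset.sum_apply, Finset.mul_sum]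
  exact Finset.sum_comm

lemma aux_rep {p : ℕ} (B : Matrix (Fin p) (Fin p) ℂ) (x y : Fin p → ℂ) :
    ∃ (s : Finset ℂ) (c : ℂ → ℕ → ℂ), (∀ μ ∈ s, μ ∈ spectrum ℂ B) ∧
      ∀ z : ℝ, x ⬝ᵥ (exp (z • B) *ᵥ y) =
        ∑ μ ∈ s, ∑ k ∈ Finset.range p, Complex.exp (z * μ) * ((z : ℂ) ^ k * c μ k) := by
  classical
  have htop := Module.End.iSup_maxGenEigenspace_eq_top (Matrix.toLinAlgEquiv' B)
  have hy : y ∈ ⨆ μ, Module.End.maxGenEigenspace (Matrix.toLinAlgEquiv' B) μ := by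
    rw [htop]; trivial
  rw [Submodule.mem_iSup_iff_exists_finsupp] at hy
  obtain ⟨g, hg, hgsum⟩ := hy
  have hfr : Module.finrank ℂ (Fin p → ℂ) = p := by simp
  have hkill : ∀ μ, ((B - μ • 1) ^ p) *ᵥ g μ = 0 := by
    intro μ
    have h1 := hg μ
    rw [Module.End.maxGenEigenspace_eq_genEigenspace_finrank, hfr,
      Module.End.mem_genEigenspace_nat, LinearMap.mem_ker] at h1
    have h2 : (Matrix.toLinAlgEquiv' B - μ • 1) ^ p
        = Matrix.toLinAlgEquiv' ((B - μ • 1) ^ p) := by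
      rw [map_pow, map_sub, _root_.map_smul, _root_.map_one]
    rw [h2, Matrix.toLinAlgEquiv'_apply] at h1
    exact h1
  refine ⟨g.support, fun μ k => (x ⬝ᵥ ((B - μ • 1) ^ k *ᵥ g μ)) * ((k ! : ℂ))⁻¹, ?_, ?_⟩
  · intro μ hμ
    have hne : g μ ≠ 0 := Finsupp.mem_support_iff.mp hμ
    have hp : 0 < p := by
      rcases Nat.eq_zero_or_pos p with h | h
      · exfalso; subst h; exact hne (Subsingleton.elim _ _)
      · exact h
    have hEig : Module.End.HasGenEigenvalue (Matrix.toLinAlgEquiv' B) μ p := by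
      have hmem : g μ ∈ (Module.End.genEigenspace (Matrix.toLinAlgEquiv' B) μ) (p : ℕ∞) := by
        have := hg μ
        rwa [Module.End.maxGenEigenspace_eq_genEigenspace_finrank, hfr] at this
      exact (Submodule.ne_bot_iff _).mpr ⟨g μ, hmem, hne⟩
    have := (Module.End.hasGenEigenvalue_iff_hasEigenvalue hp).mp hEig
    have hsp := Module.End.hasEigenvalue_iff_mem_spectrum.mp this
    rwa [AlgEquiv.spectrum_eq Matrix.toLinAlgEquiv' B] at hsp
  · intro z
    have hy' : y = ∑ μ ∈ g.support, g μ := by rw [← hgsum]; rfl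
    have hsum : exp (z • B) *ᵥ (∑ μ ∈ g.support, g μ)
        = ∑ μ ∈ g.support, exp (z • B) *ᵥ g μ := by
      simpa only [Matrix.mulVecLin_apply] using
        map_sum (Matrix.mulVecLin (exp (z • B))) (fun μ => g μ) g.support
    rw [hy', hsum, aux_dot_sum]
    refine Finset.sum_congr rfl fun μ _ => ?_
    rw [aux_exp_mulVec_eig B μ (g μ) (hkill μ) z, dotProduct_smul, aux_dot_sum,
      smul_eq_mul, Finset.mul_sum]
    refine Finset.sum_congr rfl fun k _ => ?_
    rw [dotProduct_smul, smul_eq_mul]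
    ring


lemma aux_pow_le {ε z : ℝ} (hε : 0 < ε) (hz : 0 ≤ z) (k : ℕ) :
    z ^ k * Real.exp (-(2 * ε * z)) ≤ (k / ε) ^ k * Real.exp (-(ε * z)) := by
  have key : z ^ k ≤ (k / ε) ^ k * Real.exp (ε * z) := by
    rcases Nat.eq_zero_or_pos k with rfl | hk
    · simpa using Real.one_le_exp (by positivity)
    · have hk0 : (k : ℝ) ≠ 0 := Nat.cast_ne_zero.mpr hk.ne'
      have h1 : z ≤ k / ε * Real.exp (ε * z / k) := by
        have h2 : ε * z / k ≤ Real.exp (ε * z / k) :=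
          (le_add_of_nonneg_right zero_le_one).trans (Real.add_one_le_exp _)
        calc z = (k / ε) * (ε * z / k) := by field_simp
          _ ≤ (k / ε) * Real.exp (ε * z / k) := by
              apply mul_le_mul_of_nonneg_left h2 (by positivity)
      calc z ^ k ≤ (k / ε * Real.exp (ε * z / k)) ^ k := pow_le_pow_left₀ hz h1 k
        _ = (k / ε) ^ k * (Real.exp (ε * z / k)) ^ k := mul_pow _ _ _
        _ = (k / ε) ^ k * Real.exp (ε * z) := by
            rw [← Real.exp_nat_mul]; congr 1; field_simp
  calc z ^ k * Real.exp (-(2 * ε * z))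
      ≤ ((k / ε) ^ k * Real.exp (ε * z)) * Real.exp (-(2 * ε * z)) := by
        apply mul_le_mul_of_nonneg_right key (Real.exp_pos _).le
    _ = (k / ε) ^ k * Real.exp (-(ε * z)) := by
        rw [mul_assoc, ← Real.exp_add]; ring_nf

lemma aux_decay_of_rep {P : ℕ} {s : Finset ℂ} (hs : ∀ μ ∈ s, μ.re < 0) (c : ℂ → ℕ → ℂ) :
    ∃ C ε : ℝ, 0 < ε ∧ ∀ z : ℝ, 0 ≤ z →
      ‖∑ μ ∈ s, ∑ k ∈ Finset.range P, Complex.exp (z * μ) * ((z : ℂ) ^ k * c μ k)‖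
        ≤ C * Real.exp (-(ε * z)) := by
  rcases s.eq_empty_or_nonempty with rfl | hne
  · exact ⟨0, 1, one_pos, fun z _ => by simp⟩
  set ε := (s.inf' hne fun μ => -μ.re) / 2 with hεdef
  have hε : 0 < ε := by
    have : 0 < s.inf' hne fun μ => -μ.re := by
      rw [Finset.lt_inf'_iff]
      exact fun μ hμ => neg_pos.mpr (hs μ hμ)
    positivity
  have hre : ∀ μ ∈ s, μ.re ≤ -(2 * ε) := by
    intro μ hμ
    have := Finset.inf'_le (fun μ => -μ.re) hμ
    rw [hεdef]; linarith
  refine ⟨∑ μ ∈ s, ∑ k ∈ Finset.range P, ‖c μ k‖ * (k / ε) ^ k, ε, hε, fun z hz => ?_⟩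
  calc ‖∑ μ ∈ s, ∑ k ∈ Finset.range P, Complex.exp (z * μ) * ((z : ℂ) ^ k * c μ k)‖
      ≤ ∑ μ ∈ s, ‖∑ k ∈ Finset.range P, Complex.exp (z * μ) * ((z : ℂ) ^ k * c μ k)‖ :=
        norm_sum_le _ _
    _ ≤ ∑ μ ∈ s, ∑ k ∈ Finset.range P,
          (‖c μ k‖ * (k / ε) ^ k) * Real.exp (-(ε * z)) := by
        refine Finset.sum_le_sum fun μ hμ => (norm_sum_le _ _).trans ?_
        refine Finset.sum_le_sum fun k _ => ?_
        have hterm : ‖Complex.exp (z * μ) * ((z : ℂ) ^ k * c μ k)‖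
            = Real.exp (z * μ.re) * (z ^ k * ‖c μ k‖) := by
          rw [norm_mul, norm_mul, norm_pow,
            Complex.norm_exp]
          congr 2
          · congr 1
            simp [Complex.mul_re]
          · rw [Complex.norm_real, Real.norm_eq_abs, abs_of_nonneg hz]
        rw [hterm]
        have h1 : Real.exp (z * μ.re) ≤ Real.exp (-(2 * ε * z)) := by
          apply Real.exp_le_exp.mpr
          have := hre μ hμ
          nlinarith
        calc Real.exp (z * μ.re) * (z ^ k * ‖c μ k‖)
            ≤ Real.exp (-(2 * ε * z)) * (z ^ k * ‖c μ k‖) := by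
              apply mul_le_mul_of_nonneg_right h1 (by positivity)
          _ = (z ^ k * Real.exp (-(2 * ε * z))) * ‖c μ k‖ := by ring
          _ ≤ ((k / ε) ^ k * Real.exp (-(ε * z))) * ‖c μ k‖ := by
              apply mul_le_mul_of_nonneg_right (aux_pow_le hε hz k) (norm_nonneg _)
          _ = (‖c μ k‖ * (k / ε) ^ k) * Real.exp (-(ε * z)) := by ring
    _ = (∑ μ ∈ s, ∑ k ∈ Finset.range P, ‖c μ k‖ * (k / ε) ^ k) * Real.exp (-(ε * z)) := by
        rw [Finset.sum_mul]
        exact Finset.sum_congr rfl fun μ _ => by rw [Finset.sum_mul]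
lemma aux_map_exp {q : ℕ} (A : Matrix (Fin q) (Fin q) ℝ) (z : ℝ) :
    (exp (z • A)).map (algebraMap ℝ ℂ) = exp (z • A.map (algebraMap ℝ ℂ)) := by
  have hcont : Continuous fun M : Matrix (Fin q) (Fin q) ℝ => M.map (algebraMap ℝ ℂ) :=
    continuous_id.matrix_map (continuous_algebraMap ℝ ℂ)
  have h : (exp (z • A)).map (algebraMap ℝ ℂ)
      = exp ((z • A).map (algebraMap ℝ ℂ)) := by
    letI : SeminormedRing (Matrix (Fin q) (Fin q) ℝ) := Matrix.linftyOpSemiNormedRing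
    letI : NormedRing (Matrix (Fin q) (Fin q) ℝ) := Matrix.linftyOpNormedRing
    letI : NormedAlgebra ℝ (Matrix (Fin q) (Fin q) ℝ) := Matrix.linftyOpNormedAlgebra
    letI : SeminormedRing (Matrix (Fin q) (Fin q) ℂ) := Matrix.linftyOpSemiNormedRing
    letI : NormedRing (Matrix (Fin q) (Fin q) ℂ) := Matrix.linftyOpNormedRing
    letI : NormedAlgebra ℝ (Matrix (Fin q) (Fin q) ℂ) := Matrix.linftyOpNormedAlgebra
    letI : NormedAlgebra ℚ (Matrix (Fin q) (Fin q) ℝ) := Matrix.linftyOpNormedAlgebra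
    exact map_exp (RingHom.mapMatrix (algebraMap ℝ ℂ)) hcont (z • A)
  rw [h]
  congr 1
  ext i j
  simp [Matrix.map_apply, Complex.real_smul]

lemma aux_cast_dot {q : ℕ} (x y : Fin q → ℝ) (M : Matrix (Fin q) (Fin q) ℝ) :
    ((x ⬝ᵥ (M *ᵥ y) : ℝ) : ℂ)
      = (fun i => (x i : ℂ)) ⬝ᵥ (M.map (algebraMap ℝ ℂ) *ᵥ fun i => (y i : ℂ)) := by
  simp only [Matrix.mulVec, dotProduct, Matrix.map_apply, Complex.coe_algebraMap]
  push_cast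
  rfl

lemma aux_decay {q : ℕ} (A : Matrix (Fin q) (Fin q) ℝ)
    (hA : ∀ μ ∈ spectrum ℂ (A.map (algebraMap ℝ ℂ)), μ.re < 0) (x y : Fin q → ℝ) :
    ∃ C ε : ℝ, 0 < ε ∧ ∀ z : ℝ, 0 ≤ z →
      |x ⬝ᵥ (exp (z • A) *ᵥ y)| ≤ C * Real.exp (-(ε * z)) := by
  obtain ⟨s, c, hspec, hrep⟩ :=
    aux_rep (A.map (algebraMap ℝ ℂ)) (fun i => (x i : ℂ)) (fun i => (y i : ℂ))
  obtain ⟨C, ε, hε, hbound⟩ := aux_decay_of_rep (fun μ hμ => hA μ (hspec μ hμ)) c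
  refine ⟨C, ε, hε, fun z hz => ?_⟩
  have hcast : ((x ⬝ᵥ (exp (z • A) *ᵥ y) : ℝ) : ℂ)
      = ∑ μ ∈ s, ∑ k ∈ Finset.range q, Complex.exp (z * μ) * ((z : ℂ) ^ k * c μ k) := by
    rw [aux_cast_dot, aux_map_exp, hrep]
  have := hbound z hz
  rw [← hcast, Complex.norm_real, Real.norm_eq_abs] at this
  exact this

lemma aux_spec_shift {q : ℕ} (T : Matrix (Fin q) (Fin q) ℝ) (u : ℝ)
    (hT : ∀ μ ∈ spectrum ℂ (T.map (algebraMap ℝ ℂ)), μ.re < 0) (hu : 0 ≤ u) :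
    ∀ μ ∈ spectrum ℂ ((T - u • 1).map (algebraMap ℝ ℂ)), μ.re < 0 := by
  intro μ hμ
  have hmap : (T - u • (1 : Matrix (Fin q) (Fin q) ℝ)).map (algebraMap ℝ ℂ)
      = T.map (algebraMap ℝ ℂ) - algebraMap ℂ (Matrix (Fin q) (Fin q) ℂ) (u : ℂ) := by
    ext i j
    simp [Matrix.map_apply, Matrix.sub_apply, Matrix.smul_apply, Matrix.one_apply,
      Matrix.algebraMap_matrix_apply]
    split_ifs <;> simp
  rw [hmap] at hμ
  have h2 : μ + (u : ℂ) ∈ spectrum ℂ (T.map (algebraMap ℝ ℂ)) := by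
    rw [spectrum.mem_iff] at hμ ⊢
    have heq : algebraMap ℂ (Matrix (Fin q) (Fin q) ℂ) (μ + (u : ℂ))
        - T.map (algebraMap ℝ ℂ)
        = algebraMap ℂ (Matrix (Fin q) (Fin q) ℂ) μ
          - (T.map (algebraMap ℝ ℂ) - algebraMap ℂ (Matrix (Fin q) (Fin q) ℂ) (u : ℂ)) := by
      rw [map_add]; abel
    rw [heq]
    exact hμ
  have := hT _ h2
  simp only [Complex.add_re, Complex.ofReal_re] at this
  linarith

lemma aux_isUnit_det {q : ℕ} (T : Matrix (Fin q) (Fin q) ℝ) (u : ℝ)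
    (hT : ∀ μ ∈ spectrum ℂ (T.map (algebraMap ℝ ℂ)), μ.re < 0) (hu : 0 ≤ u) :
    IsUnit (u • (1 : Matrix (Fin q) (Fin q) ℝ) - T).det := by
  rw [isUnit_iff_ne_zero]
  intro h0
  have hmap : (u • (1 : Matrix (Fin q) (Fin q) ℝ) - T).map (algebraMap ℝ ℂ)
      = algebraMap ℂ (Matrix (Fin q) (Fin q) ℂ) (u : ℂ) - T.map (algebraMap ℝ ℂ) := by
    ext i j
    simp [Matrix.map_apply, Matrix.sub_apply, Matrix.smul_apply, Matrix.one_apply,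
      Matrix.algebraMap_matrix_apply]
    split_ifs <;> simp
  have hdet0 : (algebraMap ℂ (Matrix (Fin q) (Fin q) ℂ) (u : ℂ)
      - T.map (algebraMap ℝ ℂ)).det = 0 := by
    have h := RingHom.map_det (algebraMap ℝ ℂ) (u • (1 : Matrix (Fin q) (Fin q) ℝ) - T)
    rw [h0] at h
    rw [← hmap, ← RingHom.mapMatrix_apply, ← h, map_zero]
  have hns : (u : ℂ) ∈ spectrum ℂ (T.map (algebraMap ℝ ℂ)) := by
    rw [spectrum.mem_iff, Matrix.isUnit_iff_isUnit_det, isUnit_iff_ne_zero, ne_eq, not_not]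
    exact hdet0
  have := hT _ hns
  simp only [Complex.ofReal_re] at this
  linarith



/-- exp of a scalar matrix. -/
lemma aux_exp_smul_one {𝕜 : Type*} [RCLike 𝕜] (c : 𝕜) :
    exp (c • (1 : Matrix n n 𝕜)) = exp c • (1 : Matrix n n 𝕜) := by
  letI : SeminormedRing (Matrix n n 𝕜) := Matrix.linftyOpSemiNormedRing
  letI : NormedRing (Matrix n n 𝕜) := Matrix.linftyOpNormedRing
  letI : NormedAlgebra ℝ (Matrix n n 𝕜) := Matrix.linftyOpNormedAlgebra
  letI : NormedAlgebra 𝕜 (Matrix n n 𝕜) := Matrix.linftyOpNormedAlgebra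
  have h := (map_exp (algebraMap 𝕜 (Matrix n n 𝕜)) (continuous_algebraMap _ _) c).symm
  rw [Algebra.algebraMap_eq_smul_one c, Algebra.algebraMap_eq_smul_one (exp c)] at h
  exact h

lemma aux_exp_real_smul_one (c : ℝ) :
    exp (c • (1 : Matrix n n ℝ)) = Real.exp c • (1 : Matrix n n ℝ) := by
  rw [aux_exp_smul_one, Real.exp_eq_exp_ℝ]

/-- scalar-level derivative -/
lemma aux_hasDerivAt (A : Matrix n n ℝ) (x w : n → ℝ) (z : ℝ) :
    HasDerivAt (fun s : ℝ => x ⬝ᵥ (exp (s • A) *ᵥ w))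
      (x ⬝ᵥ (exp (z • A) *ᵥ (A *ᵥ w))) z := by
  letI : SeminormedRing (Matrix n n ℝ) := Matrix.linftyOpSemiNormedRing
  letI : NormedRing (Matrix n n ℝ) := Matrix.linftyOpNormedRing
  letI : NormedAlgebra ℝ (Matrix n n ℝ) := Matrix.linftyOpNormedAlgebra
  have hd := hasDerivAt_exp_smul_const (𝕂 := ℝ) A z
  let L0 : Matrix n n ℝ →ₗ[ℝ] ℝ :=
    { toFun := fun M => x ⬝ᵥ (M *ᵥ w)
      map_add' := fun M N => by simp [Matrix.add_mulVec, dotProduct_add]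
      map_smul' := fun c M => by
        simp [Matrix.smul_mulVec, dotProduct_smul, smul_eq_mul] }
  let L := LinearMap.toContinuousLinearMap L0
  have hcomp := L.hasFDerivAt.comp_hasDerivAt z hd
  have h2 : L (exp (z • A) * A) = x ⬝ᵥ (exp (z • A) *ᵥ (A *ᵥ w)) := by
    show x ⬝ᵥ ((exp (z • A) * A) *ᵥ w) = _
    rw [← Matrix.mulVec_mulVec]
  rw [← h2]
  exact hcomp

/-- The Laplace transform of a phase-type distribution `PH(π, T)` is
`𝓛(u) = π (uI - T)⁻¹ t` for every `u ≥ 0`. -/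
theorem phaseType_laplace {p : ℕ} (T : Matrix (Fin p) (Fin p) ℝ)
    (hT : ∀ μ ∈ spectrum ℂ (T.map (algebraMap ℝ ℂ)), μ.re < 0)
    (e : Fin p → ℝ) (he : e = fun _ => 1) (t : Fin p → ℝ) (ht : t = (-T) *ᵥ e)
    (π : Fin p → ℝ) :
    ∀ u : ℝ, 0 ≤ u →
      ∫ z in Set.Ioi (0 : ℝ), Real.exp (-(u * z)) * (π ⬝ᵥ (NormedSpace.exp (z • T) *ᵥ t)) =
        π ⬝ᵥ ((u • (1 : Matrix (Fin p) (Fin p) ℝ) - T)⁻¹ *ᵥ t) := by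
  intro u hu
  set A : Matrix (Fin p) (Fin p) ℝ := T - u • 1 with hA
  set w : Fin p → ℝ := (u • (1 : Matrix (Fin p) (Fin p) ℝ) - T)⁻¹ *ᵥ t with hw
  have hAspec : ∀ μ ∈ spectrum ℂ (A.map (algebraMap ℝ ℂ)), μ.re < 0 :=
    aux_spec_shift T u hT hu
  have hdet : IsUnit (u • (1 : Matrix (Fin p) (Fin p) ℝ) - T).det :=
    aux_isUnit_det T u hT hu
  have hAw : A *ᵥ w = -t := by
    have h1 : A = -(u • (1 : Matrix (Fin p) (Fin p) ℝ) - T) := by rw [hA]; abel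
    rw [h1, Matrix.neg_mulVec, hw, Matrix.mulVec_mulVec, Matrix.mul_nonsing_inv _ hdet,
      Matrix.one_mulVec]
  -- rewrite the integrand
  have hiv : ∀ z : ℝ, Real.exp (-(u * z)) * (π ⬝ᵥ (exp (z • T) *ᵥ t))
      = π ⬝ᵥ (exp (z • A) *ᵥ t) := by
    intro z
    have hzA : z • A = (-(u * z)) • (1 : Matrix (Fin p) (Fin p) ℝ) + z • T := by
      rw [hA, smul_sub, smul_smul, neg_smul, show z * u = u * z from mul_comm z u]
      abel
    have hcomm : Commute ((-(u * z)) • (1 : Matrix (Fin p) (Fin p) ℝ)) (z • T) :=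
      (Commute.one_left (z • T)).smul_left _
    rw [hzA, Matrix.exp_add_of_commute _ _ hcomm, aux_exp_real_smul_one, smul_one_mul,
      Matrix.smul_mulVec, dotProduct_smul, smul_eq_mul]
  simp only [hiv]
  -- decay bounds
  obtain ⟨C₁, ε₁, hε₁, hb₁⟩ := aux_decay A hAspec π t
  obtain ⟨C₂, ε₂, hε₂, hb₂⟩ := aux_decay A hAspec π w
  -- continuity of the integrand
  have hcont : Continuous fun z : ℝ => π ⬝ᵥ (exp (z • A) *ᵥ t) :=
    continuous_iff_continuousAt.mpr fun z => (aux_hasDerivAt A π t z).continuousAt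
  -- integrability
  have hfi : MeasureTheory.IntegrableOn (fun z => π ⬝ᵥ (exp (z • A) *ᵥ t))
      (Set.Ioi (0 : ℝ)) := by
    refine MeasureTheory.Integrable.mono'
      ((exp_neg_integrableOn_Ioi 0 hε₁).const_mul C₁)
      hcont.aestronglyMeasurable ?_
    filter_upwards [MeasureTheory.ae_restrict_mem measurableSet_Ioi] with z hz
    rw [Real.norm_eq_abs]
    simpa [neg_mul] using hb₁ z (le_of_lt hz)
  -- derivative
  have hderiv : ∀ z ∈ Set.Ici (0 : ℝ),
      HasDerivAt (fun s : ℝ => π ⬝ᵥ (exp (s • A) *ᵥ w))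
        (-(π ⬝ᵥ (exp (z • A) *ᵥ t))) z := by
    intro z _
    have h := aux_hasDerivAt A π w z
    rw [hAw, Matrix.mulVec_neg, dotProduct_neg] at h
    exact h
  -- limit at infinity
  have htend : Filter.Tendsto (fun z : ℝ => π ⬝ᵥ (exp (z • A) *ᵥ w))
      Filter.atTop (nhds 0) := by
    apply squeeze_zero_norm' (a := fun z => C₂ * Real.exp (-(ε₂ * z)))
    · filter_upwards [Filter.eventually_ge_atTop (0 : ℝ)] with z hz
      rw [Real.norm_eq_abs]
      exact hb₂ z hz
    · have h1 : Filter.Tendsto (fun z : ℝ => ε₂ * z) Filter.atTop Filter.atTop :=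
        Filter.Tendsto.const_mul_atTop hε₂ Filter.tendsto_id
      have h2 : Filter.Tendsto (fun z : ℝ => Real.exp (-(ε₂ * z))) Filter.atTop (nhds 0) :=
        Real.tendsto_exp_neg_atTop_nhds_zero.comp h1
      simpa using h2.const_mul C₂
  have key := MeasureTheory.integral_Ioi_of_hasDerivAt_of_tendsto' hderiv hfi.neg htend
  rw [MeasureTheory.integral_neg] at key
  have hg0 : π ⬝ᵥ (exp ((0 : ℝ) • A) *ᵥ w) = π ⬝ᵥ w := by
    rw [zero_smul, exp_zero, Matrix.one_mulVec]
  rw [hg0] at key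
  have : ∫ z in Set.Ioi (0 : ℝ), π ⬝ᵥ (exp (z • A) *ᵥ t) = π ⬝ᵥ w := by linarith
  rw [this]
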